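/- Let F be a saturated fusion system over a finite p-group S with characteristic idempotent ω ∈ A(S,S)^∧_p. Write ω = ω≈ + ω≺ uniquely, where ω≈ lies in the span of basis elements [S,φ] with φ ∈ Aut_F(S), and ω≺ lies in the span of basis elements [P,φ] with P a proper subgroup of S (up to F-conjugacy). Then ω≈ = (1/|Out_F(S)|) Σ_{φ ∈ Out_F(S)} [S,φ]. -/

import Mathlib

/-- A `(G₁,G₂)`-pair: a subgroup `H ≤ G₁` with a homomorphism `ψ : H → G₂`. -/
structure GPair (G₁ G₂ : Type*) [Group G₁] [Group G₂] where
  H : Subgroup G₁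
  ψ : ↥H →* G₂

variable {G₁ G₂ G₃ : Type*} [Group G₁] [Group G₂] [Group G₃]

/-- `(G₁,G₂)`-conjugacy of pairs. -/
def gpairConj (a b : GPair G₁ G₂) : Prop :=
  ∃ (g : G₁) (h : G₂), a.H.map (MulAut.conj g).toMonoidHom = b.H ∧
    ∀ (x : G₁) (hx : x ∈ a.H) (hx' : g * x * g⁻¹ ∈ b.H),
      b.ψ ⟨g * x * g⁻¹, hx'⟩ = h * a.ψ ⟨x, hx⟩ * h⁻¹

/-- The Burnside module `A(G₁,G₂)` with coefficients in `R`: the free `R`-module on the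
conjugacy classes of `(G₁,G₂)`-pairs, an element being recorded by its coordinates. -/
def BurnsideMod (R : Type*) (G₁ G₂ : Type*) [Group G₁] [Group G₂] : Type _ :=
  Quot (gpairConj (G₁ := G₁) (G₂ := G₂)) → R

instance (R : Type*) [AddCommMonoid R] : AddCommMonoid (BurnsideMod R G₁ G₂) :=
  Pi.addCommMonoid

instance (R : Type*) [Semiring R] : Module R (BurnsideMod R G₁ G₂) :=
  Pi.module _ _ _

open Classical in
/-- The basis element of the Burnside module corresponding to a pair. -/
noncomputable def gdelta {R : Type*} [Zero R] [One R] (a : GPair G₁ G₂) :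
    BurnsideMod R G₁ G₂ :=
  fun q => if q = Quot.mk _ a then 1 else 0

/-- The subgroup `ψ⁻¹(ψ(H) ∩ K^x) ≤ G₁` appearing in the double coset formula, for
`a = (K,ρ)`, `b = (H,ψ)` and `x ∈ G₂`. -/
def dcfSub (a : GPair G₂ G₃) (b : GPair G₁ G₂) (x : G₂) : Subgroup G₁ :=
  Subgroup.map b.H.subtype
    (Subgroup.comap b.ψ (Subgroup.comap (MulAut.conj x).toMonoidHom a.H))

lemma dcfSub_le (a : GPair G₂ G₃) (b : GPair G₁ G₂) (x : G₂) : dcfSub a b x ≤ b.H :=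
  Subgroup.map_subtype_le _

lemma dcf_mem (a : GPair G₂ G₃) (b : GPair G₁ G₂) (x : G₂) (u : ↥(dcfSub a b x)) :
    ((MulAut.conj x).toMonoidHom.comp
        (b.ψ.comp (Subgroup.inclusion (dcfSub_le a b x)))) u ∈ a.H := by
  obtain ⟨w, hw, hwu⟩ := u.2
  have h1 : Subgroup.inclusion (dcfSub_le a b x) u = w := by
    apply Subtype.ext
    simpa using hwu.symm
  simp only [MonoidHom.comp_apply, h1]
  simpa [Subgroup.mem_comap] using hw

/-- The summand `[ψ⁻¹(ψ(H) ∩ K^x), ρ ∘ c_x ∘ ψ]` of the double coset formula. -/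
def dcfPair (a : GPair G₂ G₃) (b : GPair G₁ G₂) (x : G₂) : GPair G₁ G₃ where
  H := dcfSub a b x
  ψ := a.ψ.comp
    (MonoidHom.codRestrict
      ((MulAut.conj x).toMonoidHom.comp (b.ψ.comp (Subgroup.inclusion (dcfSub_le a b x))))
      a.H (dcf_mem a b x))

/-- `T` is a transversal of the double cosets `K\G₂/ψ(H)`, for `a = (K,ρ)`, `b = (H,ψ)`. -/
def IsTransversal (a : GPair G₂ G₃) (b : GPair G₁ G₂) (T : Finset G₂) : Prop :=
  ∀ y : G₂, ∃! x, x ∈ T ∧ ∃ k ∈ a.H, ∃ v ∈ b.ψ.range, y = k * x * v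

/-- The bilinear pairing `c` is the composition pairing of Burnside modules: on basis
elements it is given by the double coset formula
`[K,ρ] ∘ [H,ψ] = Σ_{x ∈ K\G₂/ψ(H)} [ψ⁻¹(ψ(H) ∩ K^x), ρ ∘ c_x ∘ ψ]`. -/
def DCFLaw {R : Type*} [CommSemiring R]
    (c : BurnsideMod R G₂ G₃ →ₗ[R] BurnsideMod R G₁ G₂ →ₗ[R] BurnsideMod R G₁ G₃) :
    Prop :=
  ∀ (a : GPair G₂ G₃) (b : GPair G₁ G₂) (T : Finset G₂), IsTransversal a b T →
    c (gdelta a) (gdelta b) = ∑ x ∈ T, gdelta (dcfPair a b x)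

/-- A fusion system `F` over a finite `p`-group `S`.  A morphism `P → Q` is recorded as a
homomorphism `↥P →* S` whose image is contained in `Q`. -/
structure FusionSystem (S : Type*) [Group S] where
  Hom : (P : Subgroup S) → Set (↥P →* S)
  inj : ∀ (P : Subgroup S) (φ : ↥P →* S), φ ∈ Hom P → Function.Injective φ
  conj_mem : ∀ (P : Subgroup S) (g : S), (MulAut.conj g).toMonoidHom.comp P.subtype ∈ Hom P
  comp_mem : ∀ (P Q : Subgroup S) (φ : ↥P →* S) (χ : ↥Q →* S), φ ∈ Hom P → χ ∈ Hom Q →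
    ∀ h : ∀ x, φ x ∈ Q, χ.comp (φ.codRestrict Q h) ∈ Hom P
  inv_mem : ∀ (P Q : Subgroup S) (e : ↥P ≃* ↥Q), Q.subtype.comp e.toMonoidHom ∈ Hom P →
    P.subtype.comp e.symm.toMonoidHom ∈ Hom Q

variable {S : Type*} [Group S]

/-- `P` and `Q` are `F`-conjugate: isomorphic in `F`. -/
def FusionSystem.FConj (F : FusionSystem S) (P Q : Subgroup S) : Prop :=
  ∃ φ ∈ F.Hom P, φ.range = Q

/-- `P` is fully centralized in `F`: `|C_S(P)| ≥ |C_S(P')|` for all `P'` that are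
`F`-conjugate to `P`. -/
def FusionSystem.FullyCentralized (F : FusionSystem S) (P : Subgroup S) : Prop :=
  ∀ Q, F.FConj P Q →
    Nat.card (Subgroup.centralizer (Q : Set S)) ≤ Nat.card (Subgroup.centralizer (P : Set S))

/-- `P` is fully normalized in `F`: `|N_S(P)| ≥ |N_S(P')|` for all `P'` that are
`F`-conjugate to `P`. -/
def FusionSystem.FullyNormalized (F : FusionSystem S) (P : Subgroup S) : Prop :=
  ∀ Q, F.FConj P Q → Nat.card (Subgroup.normalizer (Q : Set S)) ≤ Nat.card (Subgroup.normalizer (P : Set S))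

/-- Saturation of a fusion system (Definition 1.3): (I) fully normalized subgroups are
fully centralized and `Aut_S(P)` has index prime to `p` in `Aut_F(P)`; (II) every
morphism `φ` whose image is fully centralized extends to the subgroup
`N_φ = {g ∈ N_S(P) : φ ∘ c_g ∘ φ⁻¹ ∈ Aut_S(φP)}`. -/
def FusionSystem.Saturated (p : ℕ) (F : FusionSystem S) : Prop :=
  (∀ P : Subgroup S, F.FullyNormalized P → F.FullyCentralized P ∧
    ¬ p ∣ (Nat.card {φ : ↥P →* S // φ ∈ F.Hom P ∧ φ.range = P} /
      Nat.card {φ : ↥P →* S // ∃ g ∈ Subgroup.normalizer (P : Set S),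
        φ = (MulAut.conj g).toMonoidHom.comp P.subtype})) ∧
  (∀ (P : Subgroup S) (φ : ↥P →* S), φ ∈ F.Hom P → F.FullyCentralized φ.range →
    ∀ N : Subgroup S,
      (∀ g : S, g ∈ N ↔ g ∈ Subgroup.normalizer (P : Set S) ∧ ∃ h : S,
        ∀ (x : S) (hx : x ∈ P) (hx' : g * x * g⁻¹ ∈ P),
          φ ⟨g * x * g⁻¹, hx'⟩ = h * φ ⟨x, hx⟩ * h⁻¹) →
      ∃ φbar ∈ F.Hom N, ∀ (x : S) (hx : x ∈ P) (hx' : x ∈ N),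
        φbar ⟨x, hx'⟩ = φ ⟨x, hx⟩)

/-- The basis element `[P,φ]_P^S` of `A(P,S)` determined by a homomorphism
`φ : P → S`. -/
def restPair (P : Subgroup S) (φ : ↥P →* S) : GPair ↥P S :=
  ⟨⊤, φ.comp Subgroup.topEquiv.toMonoidHom⟩

section CharacteristicIdempotent

variable (p : ℕ) [Fact p.Prime] {S : Type*} [Group S]

/-- Property (a) of a characteristic idempotent: `ω ∈ A_F(S,S)^∧_p`, i.e. `ω` is
supported on basis elements `[P,φ]` with `φ ∈ Hom_F(P,S)`. -/
def PropA (F : FusionSystem S) (ω : BurnsideMod ℤ_[p] S S) : Prop :=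
  ∀ q, ω q ≠ 0 → ∃ a : GPair S S, Quot.mk _ a = q ∧ a.ψ ∈ F.Hom a.H

/-- Property (b1), right `F`-stability: `ω ∘ [P,φ]_P^S = ω ∘ [P,ι_P]_P^S` in
`A(P,S)^∧_p` for all `P ≤ S` and `φ ∈ Hom_F(P,S)`.  Here `comp1 P` is the composition
pairing `A(S,S)^∧_p × A(P,S)^∧_p → A(P,S)^∧_p`. -/
def PropB1 (F : FusionSystem S)
    (comp1 : ∀ P : Subgroup S, BurnsideMod ℤ_[p] S S →ₗ[ℤ_[p]]
      BurnsideMod ℤ_[p] ↥P S →ₗ[ℤ_[p]] BurnsideMod ℤ_[p] ↥P S)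
    (ω : BurnsideMod ℤ_[p] S S) : Prop :=
  ∀ (P : Subgroup S) (φ : ↥P →* S), φ ∈ F.Hom P →
    comp1 P ω (gdelta (restPair P φ)) = comp1 P ω (gdelta (restPair P P.subtype))

/-- Property (b2), left `F`-stability: `[φ(P),φ⁻¹]_S^P ∘ ω = [P,id]_S^P ∘ ω` in
`A(S,P)^∧_p` for all `P ≤ S` and `φ ∈ Hom_F(P,S)`, where `φinv` denotes the inverse of
`φ` on its image.  Here `comp2 P` is the composition pairing
`A(S,P)^∧_p × A(S,S)^∧_p → A(S,P)^∧_p`. -/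
def PropB2 (F : FusionSystem S)
    (comp2 : ∀ P : Subgroup S, BurnsideMod ℤ_[p] S ↥P →ₗ[ℤ_[p]]
      BurnsideMod ℤ_[p] S S →ₗ[ℤ_[p]] BurnsideMod ℤ_[p] S ↥P)
    (ω : BurnsideMod ℤ_[p] S S) : Prop :=
  ∀ (P : Subgroup S) (φ : ↥P →* S), φ ∈ F.Hom P →
    ∀ φinv : ↥φ.range →* ↥P, (∀ y : ↥φ.range, (φ (φinv y) : S) = (y : S)) →
      comp2 P (gdelta ⟨φ.range, φinv⟩) ω = comp2 P (gdelta ⟨P, MonoidHom.id ↥P⟩) ω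

/-- Property (c): `ε(ω) = 1`, where `ε` is the orbit-counting augmentation, sending the
basis element `[H,ψ]` to the index `|S : H|`; `rep` is a choice of representatives of the
conjugacy classes of pairs. -/
def PropC (rep : Quot (gpairConj (G₁ := S) (G₂ := S)) → GPair S S)
    (ω : BurnsideMod ℤ_[p] S S) : Prop :=
  ∑ᶠ q, ω q * ((rep q).H.index : ℤ_[p]) = 1

end CharacteristicIdempotent


section Part1

variable {G₁ G₂ G₃ : Type*} [Group G₁] [Group G₂] [Group G₃]

lemma mem_map_conj {H : Subgroup G₁} {g x : G₁} :
    x ∈ H.map (MulAut.conj g).toMonoidHom ↔ g⁻¹ * x * g ∈ H := by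
  constructor
  · rintro ⟨y, hy, rfl⟩
    simpa [MulAut.conj, mul_assoc] using hy
  · intro h
    exact ⟨g⁻¹ * x * g, h, by simp [MulAut.conj]; group⟩

lemma gpairConj_equiv : Equivalence (gpairConj (G₁ := G₁) (G₂ := G₂)) := by
  constructor
  · intro a
    refine ⟨1, 1, ?_, ?_⟩
    · ext x; simp [mem_map_conj]
    · intro x hx hx'
      have : (⟨1 * x * 1⁻¹, hx'⟩ : ↥a.H) = ⟨x, hx⟩ := by
        apply Subtype.ext; simp
      simp [this]
  · rintro a b ⟨g, h, hmap, hcond⟩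
    have hmem : ∀ x : G₁, x ∈ b.H ↔ g⁻¹ * x * g ∈ a.H := by
      intro x; rw [← hmap, mem_map_conj]
    refine ⟨g⁻¹, h⁻¹, ?_, ?_⟩
    · ext x
      rw [mem_map_conj, hmem]
      constructor <;> intro hh <;> [skip; skip] <;>
        · convert hh using 2 <;> group
    · intro x hx hx'
      have hx2 : g * (g⁻¹ * x * g⁻¹⁻¹) * g⁻¹ ∈ b.H := by
        convert hx using 1; group
      have := hcond (g⁻¹ * x * g⁻¹⁻¹) hx' hx2
      have he : (⟨g * (g⁻¹ * x * g⁻¹⁻¹) * g⁻¹, hx2⟩ : ↥b.H) = ⟨x, hx⟩ := by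
        apply Subtype.ext; simp; group
      rw [he] at this
      rw [this]; group
  · rintro a b c ⟨g, h, hmap, hcond⟩ ⟨g', h', hmap', hcond'⟩
    have hmemb : ∀ x : G₁, x ∈ b.H ↔ g⁻¹ * x * g ∈ a.H := by
      intro x; rw [← hmap, mem_map_conj]
    have hmemc : ∀ x : G₁, x ∈ c.H ↔ g'⁻¹ * x * g' ∈ b.H := by
      intro x; rw [← hmap', mem_map_conj]
    refine ⟨g' * g, h' * h, ?_, ?_⟩
    · ext x
      rw [mem_map_conj, hmemc, hmemb]
      have he : g⁻¹ * (g'⁻¹ * x * g') * g = (g' * g)⁻¹ * x * (g' * g) := by group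
      rw [he]
    · intro x hx hx'
      have hb : g * x * g⁻¹ ∈ b.H := by
        rw [hmemc] at hx'
        convert hx' using 1
        · group
      have h1 := hcond x hx hb
      have hc2 : g' * (g * x * g⁻¹) * g'⁻¹ ∈ c.H := by convert hx' using 1; group
      have h2 := hcond' (g * x * g⁻¹) hb hc2
      have he : (⟨g' * (g * x * g⁻¹) * g'⁻¹, hc2⟩ : ↥c.H) = ⟨g' * g * x * (g' * g)⁻¹, hx'⟩ := by
        apply Subtype.ext; simp; group
      rw [he] at h2
      rw [h2, h1]; group

lemma quot_mk_eq_iff {a b : GPair G₁ G₂} :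
    Quot.mk (gpairConj (G₁ := G₁) (G₂ := G₂)) a = Quot.mk _ b ↔ gpairConj a b := by
  rw [Quot.eq, (gpairConj_equiv).eqvGen_iff]

lemma card_eq_of_gpairConj {a b : GPair G₁ G₂} (hab : gpairConj a b) :
    Nat.card a.H = Nat.card b.H := by
  obtain ⟨g, h, hmap, -⟩ := hab
  rw [← hmap]
  exact Nat.card_congr (Subgroup.equivMapOfInjective a.H _ (MulAut.conj g).injective).toEquiv

lemma map_conj_top (g : G₁) :
    (⊤ : Subgroup G₁).map (MulAut.conj g).toMonoidHom = ⊤ := by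
  ext x; simp only [mem_map_conj, Subgroup.mem_top]

lemma gpairConj_top_iff {ψ ψ' : ↥(⊤ : Subgroup G₁) →* G₂} :
    gpairConj (⟨⊤, ψ⟩ : GPair G₁ G₂) ⟨⊤, ψ'⟩ ↔
      ∃ g h, ∀ x : G₁, ψ' ⟨g * x * g⁻¹, Subgroup.mem_top _⟩ = h * ψ ⟨x, Subgroup.mem_top _⟩ * h⁻¹ := by
  constructor
  · rintro ⟨g, h, -, hcond⟩
    exact ⟨g, h, fun x => hcond x (Subgroup.mem_top _) (Subgroup.mem_top _)⟩
  · rintro ⟨g, h, hcond⟩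
    exact ⟨g, h, map_conj_top g, fun x _ _ => hcond x⟩

end Part1

section Part2

open Classical

variable {G₁ G₂ G₃ : Type*} [Group G₁] [Group G₂] [Group G₃]

lemma exists_transversal [Finite G₂] (a : GPair G₂ G₃) (b : GPair G₁ G₂) :
    ∃ T : Finset G₂, IsTransversal a b T := by
  classical
  cases nonempty_fintype G₂
  let r : G₂ → G₂ → Prop := fun y z => ∃ k ∈ a.H, ∃ v ∈ b.ψ.range, z = k * y * v
  have hr : Equivalence r := by
    constructor
    · intro y; exact ⟨1, one_mem _, 1, one_mem _, by simp⟩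
    · rintro y z ⟨k, hk, v, hv, rfl⟩
      exact ⟨k⁻¹, inv_mem hk, v⁻¹, inv_mem hv, by group⟩
    · rintro x y z ⟨k, hk, v, hv, rfl⟩ ⟨k', hk', v', hv', rfl⟩
      exact ⟨k' * k, mul_mem hk' hk, v * v', mul_mem hv hv', by group⟩
  let s : Setoid G₂ := ⟨r, hr⟩
  let c : G₂ → G₂ := fun y => (Quotient.mk s y).out
  refine ⟨Finset.univ.image c, ?_⟩
  intro y
  have hcy : r y (c y) := by
    have : Quotient.mk s (c y) = Quotient.mk s y := Quotient.out_eq _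
    exact (Quotient.eq.mp this.symm : s.r y (c y))
  refine ⟨c y, ⟨Finset.mem_image_of_mem c (Finset.mem_univ y), ?_⟩, ?_⟩
  · obtain ⟨k, hk, v, hv, hyy⟩ := hr.symm hcy
    exact ⟨k, hk, v, hv, hyy⟩
  · rintro x ⟨hxT, k, hk, v, hv, rfl⟩
    obtain ⟨y'', -, rfl⟩ := Finset.mem_image.mp hxT
    have h1 : r (c y'') (k * c y'' * v) := ⟨k, hk, v, hv, rfl⟩
    have h2 : Quotient.mk s (c y'') = Quotient.mk s (k * c y'' * v) := Quotient.sound h1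
    have h3 : Quotient.mk s (c y'') = Quotient.mk s y'' := Quotient.out_eq _
    show c y'' = c (k * c y'' * v)
    simp only [c, ← h2, h3]

lemma card_comap_le {A B : Type*} [Group A] [Group B] [Finite B] (f : A →* B)
    (hf : Function.Injective f) (K : Subgroup B) :
    Nat.card (K.comap f) ≤ Nat.card K := by
  have : Function.Injective (fun x : ↥(K.comap f) => (⟨f x, x.2⟩ : ↥K)) := by
    intro u v huv
    exact Subtype.ext (hf (congrArg Subtype.val huv))
  exact Nat.card_le_card_of_injective _ this

lemma card_dcfSub_le_right [Finite G₁] (a : GPair G₂ G₃) (b : GPair G₁ G₂) (x : G₂) :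
    Nat.card (dcfSub a b x) ≤ Nat.card b.H :=
  Subgroup.card_le_of_le (dcfSub_le a b x)

lemma card_dcfSub_le_left [Finite G₁] [Finite G₂] (a : GPair G₂ G₃) (b : GPair G₁ G₂) (x : G₂)
    (hb : Function.Injective b.ψ) :
    Nat.card (dcfSub a b x) ≤ Nat.card a.H := by
  have h1 : Nat.card (dcfSub a b x) =
      Nat.card ((a.H.comap (MulAut.conj x).toMonoidHom).comap b.ψ) :=
    (Nat.card_congr (Subgroup.equivMapOfInjective _ _ (Subgroup.subtype_injective _)).toEquiv).symm
  rw [h1]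
  calc Nat.card ((a.H.comap (MulAut.conj x).toMonoidHom).comap b.ψ)
      ≤ Nat.card (a.H.comap (MulAut.conj x).toMonoidHom) := card_comap_le _ hb _
    _ ≤ Nat.card a.H := card_comap_le _ (MulAut.conj x).injective _

end Part2

section Part3

variable {S : Type*} [Group S]

/-- The full pair attached to an endomorphism of `S`. -/
def tp (f : S →* S) : GPair S S := ⟨⊤, f.comp (⊤ : Subgroup S).subtype⟩

/-- Its class. -/
def cls (f : S →* S) : Quot (gpairConj (G₁ := S) (G₂ := S)) := Quot.mk _ (tp f)

/-- The full pair over `↥⊤` attached to an endomorphism of `S`. -/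
def tp' (v : S →* S) : GPair ↥(⊤ : Subgroup S) S :=
  ⟨⊤, v.comp ((⊤ : Subgroup S).subtype.comp (⊤ : Subgroup ↥(⊤ : Subgroup S)).subtype)⟩

/-- Simultaneous conjugacy of endomorphisms. -/
def Rrel (f f' : S →* S) : Prop := ∃ g h, ∀ x : S, f' (g * x * g⁻¹) = h * f x * h⁻¹

lemma cls_eq_iff {f f' : S →* S} : cls f = cls f' ↔ Rrel f f' := by
  rw [cls, cls, tp, tp, quot_mk_eq_iff, gpairConj_top_iff]
  exact Iff.rfl

lemma cls'_eq_iff {v v' : S →* S} :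
    Quot.mk (gpairConj (G₁ := ↥(⊤ : Subgroup S)) (G₂ := S)) (tp' v) = Quot.mk _ (tp' v') ↔
      Rrel v v' := by
  rw [tp', tp', quot_mk_eq_iff, gpairConj_top_iff]
  constructor
  · rintro ⟨g, h, hc⟩
    refine ⟨(g : S), h, fun x => ?_⟩
    have := hc ⟨x, Subgroup.mem_top x⟩
    simpa using this
  · rintro ⟨g, h, hc⟩
    refine ⟨⟨g, Subgroup.mem_top g⟩, h, fun x => ?_⟩
    simpa using hc (x : S)

lemma Rrel_comp_right {u v v' : S →* S} (hu : Function.Surjective u) (h : Rrel v v') :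
    Rrel (v.comp u) (v'.comp u) := by
  obtain ⟨g, hh, hc⟩ := h
  obtain ⟨g₂, hg₂⟩ := hu g
  refine ⟨g₂, hh, fun x => ?_⟩
  have harg : u (g₂ * x * g₂⁻¹) = g * u x * g⁻¹ := by
    rw [map_mul, map_mul, map_inv, hg₂]
  simp only [MonoidHom.comp_apply, harg, hc]

lemma cls_comp_right {u v v' : S →* S} (hu : Function.Surjective u) (h : cls v = cls v') :
    cls (v.comp u) = cls (v'.comp u) :=
  cls_eq_iff.mpr (Rrel_comp_right hu (cls_eq_iff.mp h))

lemma cls_comp_cancel {u v v' : S →* S} (hu : Function.Bijective u) :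
    cls (v.comp u) = cls (v'.comp u) ↔ cls v = cls v' := by
  constructor
  · intro h
    have hsur : Function.Surjective (MulEquiv.ofBijective u hu).symm.toMonoidHom :=
      (MulEquiv.ofBijective u hu).symm.surjective
    have := cls_comp_right hsur h
    have he : ∀ w : S →* S,
        (w.comp u).comp (MulEquiv.ofBijective u hu).symm.toMonoidHom = w := by
      intro w
      ext x
      exact congrArg w ((MulEquiv.ofBijective u hu).apply_symm_apply x)
    rwa [he, he] at this
  · exact cls_comp_right hu.surjective

lemma exists_tp_of_top (a : GPair S S) (ha : a.H = ⊤) : ∃ v : S →* S, a = tp v := by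
  obtain ⟨H, ψ⟩ := a
  dsimp at ha
  subst ha
  refine ⟨ψ.comp Subgroup.topEquiv.symm.toMonoidHom, ?_⟩
  have he : (ψ.comp Subgroup.topEquiv.symm.toMonoidHom).comp (⊤ : Subgroup S).subtype = ψ := by
    ext x
    exact congrArg ψ (Subtype.ext rfl)
  rw [tp, he]

variable [Finite S]

lemma card_class_top {w : S →* S} {c : GPair S S} (h : Quot.mk _ c = cls w) :
    Nat.card c.H = Nat.card S := by
  rw [card_eq_of_gpairConj (quot_mk_eq_iff.mp h)]
  exact Subgroup.card_top

lemma eq_top_of_class_top {w : S →* S} {c : GPair S S} (h : Quot.mk _ c = cls w) :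
    c.H = ⊤ :=
  Subgroup.eq_top_of_card_eq _ (card_class_top h)

lemma card_class_top' {w : S →* S} {c : GPair ↥(⊤ : Subgroup S) S}
    (h : Quot.mk (gpairConj (G₁ := ↥(⊤ : Subgroup S)) (G₂ := S)) c = Quot.mk _ (tp' w)) :
    Nat.card c.H = Nat.card S := by
  rw [card_eq_of_gpairConj (quot_mk_eq_iff.mp h)]
  show Nat.card (⊤ : Subgroup ↥(⊤ : Subgroup S)) = Nat.card S
  rw [Subgroup.card_top]
  exact Subgroup.card_top

/-- `v` is an `F`-automorphism of `S`. -/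
def FAuto (F : FusionSystem S) (v : S →* S) : Prop :=
  v.comp (⊤ : Subgroup S).subtype ∈ F.Hom ⊤

variable {F : FusionSystem S}

lemma FAuto_inj {v : S →* S} (hv : FAuto F v) : Function.Injective v := by
  have hinj := F.inj ⊤ _ hv
  intro x y hxy
  have : (⟨x, Subgroup.mem_top x⟩ : ↥(⊤ : Subgroup S)) = ⟨y, Subgroup.mem_top y⟩ :=
    hinj (by simpa using hxy)
  simpa using congrArg Subtype.val this

lemma FAuto_bij {v : S →* S} (hv : FAuto F v) : Function.Bijective v :=
  Finite.injective_iff_bijective.mp (FAuto_inj hv)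

lemma FAuto_id : FAuto F (MonoidHom.id S) := by
  have h := F.conj_mem ⊤ 1
  have he : (MulAut.conj (1 : S)).toMonoidHom.comp (⊤ : Subgroup S).subtype =
      (MonoidHom.id S).comp (⊤ : Subgroup S).subtype := by
    ext x; simp
  rwa [he] at h

lemma FAuto_comp {u v : S →* S} (hu : FAuto F u) (hv : FAuto F v) : FAuto F (u.comp v) := by
  have hmem : ∀ x : ↥(⊤ : Subgroup S), (v.comp (⊤ : Subgroup S).subtype) x ∈ (⊤ : Subgroup S) :=
    fun x => Subgroup.mem_top _
  have h := F.comp_mem ⊤ ⊤ _ _ hv hu hmem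
  have he : (u.comp (⊤ : Subgroup S).subtype).comp
      ((v.comp (⊤ : Subgroup S).subtype).codRestrict ⊤ hmem) =
      (u.comp v).comp (⊤ : Subgroup S).subtype := by
    ext x; simp
  rwa [he] at h

/-- The inverse of a bijective endomorphism. -/
noncomputable def minv (v : S →* S) (hv : Function.Bijective v) : S →* S :=
  (MulEquiv.ofBijective v hv).symm.toMonoidHom

lemma minv_comp {v : S →* S} (hv : Function.Bijective v) :
    (minv v hv).comp v = MonoidHom.id S := by
  ext x; exact (MulEquiv.ofBijective v hv).symm_apply_apply x

lemma comp_minv {v : S →* S} (hv : Function.Bijective v) :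
    v.comp (minv v hv) = MonoidHom.id S := by
  ext x; exact (MulEquiv.ofBijective v hv).apply_symm_apply x

lemma FAuto_minv {v : S →* S} (hv : FAuto F v) (hbij : Function.Bijective v) :
    FAuto F (minv v hbij) := by
  set e0 : S ≃* S := MulEquiv.ofBijective v hbij with he0
  let e : ↥(⊤ : Subgroup S) ≃* ↥(⊤ : Subgroup S) :=
    (Subgroup.topEquiv.trans e0).trans Subgroup.topEquiv.symm
  have h1 : (⊤ : Subgroup S).subtype.comp e.toMonoidHom = v.comp (⊤ : Subgroup S).subtype := by
    ext x
    rfl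
  have h := F.inv_mem ⊤ ⊤ e (by rw [h1]; exact hv)
  have h2 : (⊤ : Subgroup S).subtype.comp e.symm.toMonoidHom =
      (minv v hbij).comp (⊤ : Subgroup S).subtype := by
    ext x
    rfl
  rwa [h2] at h

end Part3

section Part4a

variable {G₁ G₂ : Type*} [Group G₁] [Group G₂]

instance gpair_finite [Finite G₁] [Finite G₂] : Finite (GPair G₁ G₂) := by
  have : Finite ((H : Subgroup G₁) × (↥H →* G₂)) := by
    have : ∀ H : Subgroup G₁, Finite (↥H →* G₂) := fun H => DFunLike.finite _
    exact Finite.instSigma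
  exact Finite.of_injective (fun a : GPair G₁ G₂ => (⟨a.H, a.ψ⟩ : (H : Subgroup G₁) × (↥H →* G₂)))
    (by rintro ⟨H, ψ⟩ ⟨H', ψ'⟩ h; cases h; rfl)

instance quot_gpair_finite [Finite G₁] [Finite G₂] :
    Finite (Quot (gpairConj (G₁ := G₁) (G₂ := G₂))) :=
  Finite.of_surjective (Quot.mk _) Quot.exists_rep

lemma bm_sum_apply {R : Type*} [Semiring R] {ι : Type*} (s : Finset ι)
    (f : ι → BurnsideMod R G₁ G₂) (t : Quot (gpairConj (G₁ := G₁) (G₂ := G₂))) :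
    (∑ i ∈ s, f i) t = ∑ i ∈ s, f i t := by
  classical
  induction s using Finset.cons_induction with
  | empty => rfl
  | cons i s hi ih => rw [Finset.sum_cons, Finset.sum_cons, ← ih]; rfl

open Classical in
lemma gdelta_apply {R : Type*} [Zero R] [One R] (a : GPair G₁ G₂)
    (t : Quot (gpairConj (G₁ := G₁) (G₂ := G₂))) :
    gdelta (R := R) a t = if t = Quot.mk _ a then 1 else 0 := rfl

lemma smul_bm_apply {R : Type*} [Semiring R] (c : R) (f : BurnsideMod R G₁ G₂)
    (t : Quot (gpairConj (G₁ := G₁) (G₂ := G₂))) : (c • f) t = c * f t := rfl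

lemma linmap_omega_expand {R : Type*} [CommSemiring R] {M : Type*} [AddCommMonoid M]
    [Module R M] [Fintype (Quot (gpairConj (G₁ := G₁) (G₂ := G₂)))]
    (L : BurnsideMod R G₁ G₂ →ₗ[R] M) (ω : BurnsideMod R G₁ G₂)
    (δ : Quot (gpairConj (G₁ := G₁) (G₂ := G₂)) → BurnsideMod R G₁ G₂)
    (hδ : ω = ∑ i, ω i • δ i) : L ω = ∑ i, ω i • L (δ i) := by
  conv_lhs => rw [hδ]
  rw [map_sum]
  exact Finset.sum_congr rfl fun i _ => L.map_smul _ _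

lemma omega_expand {R : Type*} [CommSemiring R]
    [Fintype (Quot (gpairConj (G₁ := G₁) (G₂ := G₂)))]
    (ω : BurnsideMod R G₁ G₂) (r : Quot (gpairConj (G₁ := G₁) (G₂ := G₂)) → GPair G₁ G₂)
    (hr : ∀ q, Quot.mk _ (r q) = q) : ω = ∑ q, ω q • gdelta (r q) := by
  classical
  funext t
  rw [bm_sum_apply]
  have key : ∀ q : Quot (gpairConj (G₁ := G₁) (G₂ := G₂)),
      (ω q • gdelta (r q)) t = ω q * (if t = q then 1 else 0) := by
    intro q
    rw [smul_bm_apply, gdelta_apply, hr q]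
  rw [Finset.sum_congr rfl (fun q _ => key q)]
  simp
  exact ((Finset.sum_ite_eq Finset.univ t (fun x => ω x)).trans (if_pos (Finset.mem_univ t))).symm

end Part4a

section Part4b

variable {S : Type*} [Group S]

/-- `q` is the class of an `F`-automorphism pair. -/
def FB (F : FusionSystem S) (q : Quot (gpairConj (G₁ := S) (G₂ := S))) : Prop :=
  ∃ v : S →* S, q = cls v ∧ FAuto F v

/-- `q` is a class of pairs `[S,φ]` with `φ ∈ Aut_F(S)` (as in the theorem statement). -/
def IsTopCl (F : FusionSystem S) (q : Quot (gpairConj (G₁ := S) (G₂ := S))) : Prop :=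
  ∃ b : GPair S S, Quot.mk _ b = q ∧ b.H = ⊤ ∧ b.ψ ∈ F.Hom b.H

lemma FB_iff_isTopCl {F : FusionSystem S} {q} : FB F q ↔ IsTopCl F q := by
  constructor
  · rintro ⟨v, rfl, hv⟩
    exact ⟨tp v, rfl, rfl, hv⟩
  · rintro ⟨b, hb, htop, hF⟩
    obtain ⟨v, rfl⟩ := exists_tp_of_top b htop
    exact ⟨v, hb.symm, hF⟩

open Classical in
/-- A well-adapted choice of representatives of classes. -/
noncomputable def rchoice (F : FusionSystem S)
    (rep : Quot (gpairConj (G₁ := S) (G₂ := S)) → GPair S S)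
    (q : Quot (gpairConj (G₁ := S) (G₂ := S))) : GPair S S :=
  if h : FB F q then tp h.choose
  else if h2 : ∃ a : GPair S S, Quot.mk _ a = q ∧ a.ψ ∈ F.Hom a.H then h2.choose else rep q

lemma rchoice_mk {F : FusionSystem S} {rep} (hrep : ∀ q, Quot.mk _ (rep q) = q) (q) :
    Quot.mk _ (rchoice F rep q) = q := by
  rw [rchoice]
  split_ifs with h h2
  · exact h.choose_spec.1.symm
  · exact h2.choose_spec.1
  · exact hrep q

lemma rchoice_top {F : FusionSystem S} {rep} {q} (h : FB F q) :
    ∃ v : S →* S, rchoice F rep q = tp v ∧ q = cls v ∧ FAuto F v := by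
  rw [rchoice, dif_pos h]
  exact ⟨h.choose, rfl, h.choose_spec.1, h.choose_spec.2⟩

lemma rchoice_small {F : FusionSystem S} {rep} {q} (h : ¬ FB F q)
    (h2 : ∃ a : GPair S S, Quot.mk _ a = q ∧ a.ψ ∈ F.Hom a.H) :
    Quot.mk _ (rchoice F rep q) = q ∧ (rchoice F rep q).ψ ∈ F.Hom (rchoice F rep q).H ∧
      (rchoice F rep q).H ≠ ⊤ := by
  rw [rchoice, dif_neg h, dif_pos h2]
  refine ⟨h2.choose_spec.1, h2.choose_spec.2, fun htop => h ?_⟩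
  exact FB_iff_isTopCl.mpr ⟨h2.choose, h2.choose_spec.1, htop, h2.choose_spec.2⟩

end Part4b

section Part4c

variable {G₁ G₂ G₃ : Type*} [Group G₁] [Group G₂] [Group G₃]

lemma dcfSub_eq_of_top (a : GPair G₂ G₃) (b : GPair G₁ G₂) (x : G₂) (ha : a.H = ⊤) :
    dcfSub a b x = b.H := by
  rw [dcfSub, ha, Subgroup.comap_top, Subgroup.comap_top, ← MonoidHom.range_eq_map,
    Subgroup.range_subtype]

lemma dcfPair_psi_apply (a : GPair G₂ G₃) (b : GPair G₁ G₂) (x : G₂) (u : ↥(dcfSub a b x)) :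
    (dcfPair a b x).ψ u =
      a.ψ ⟨x * b.ψ (Subgroup.inclusion (dcfSub_le a b x) u) * x⁻¹, dcf_mem a b x u⟩ := rfl

variable {S : Type*} [Group S]

lemma key1_conj (v f : S →* S) :
    Quot.mk (gpairConj (G₁ := ↥(⊤ : Subgroup S)) (G₂ := S))
      (dcfPair (tp v) (restPair (⊤ : Subgroup S) (f.comp (⊤ : Subgroup S).subtype)) 1) =
      Quot.mk _ (tp' (v.comp f)) := by
  have hsub : dcfSub (tp v) (restPair (⊤ : Subgroup S) (f.comp (⊤ : Subgroup S).subtype)) 1 =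
      (⊤ : Subgroup ↥(⊤ : Subgroup S)) :=
    dcfSub_eq_of_top _ _ _ rfl
  refine (quot_mk_eq_iff.mpr ⟨1, 1, ?_, ?_⟩).symm
  · show Subgroup.map (MulAut.conj (1 : ↥(⊤ : Subgroup S))).toMonoidHom ⊤ = _
    rw [map_conj_top]
    exact hsub.symm
  · intro x hx hx'
    erw [dcfPair_psi_apply]
    simp only [tp, tp', restPair, MonoidHom.comp_apply, one_mul, mul_one, inv_one]
    rfl

end Part4c

section Keys

variable {S : Type*} [Group S]

lemma key2_conj (v v' : S →* S) :
    Quot.mk (gpairConj (G₁ := S) (G₂ := S)) (dcfPair (tp v) (tp v') 1) = cls (v.comp v') := by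
  have hsub : dcfSub (tp v) (tp v') 1 = (⊤ : Subgroup S) := dcfSub_eq_of_top _ _ _ rfl
  show _ = Quot.mk _ (tp (v.comp v'))
  refine (quot_mk_eq_iff.mpr ⟨1, 1, ?_, ?_⟩).symm
  · show Subgroup.map (MulAut.conj (1 : S)).toMonoidHom ⊤ = _
    rw [map_conj_top]
    exact hsub.symm
  · intro x hx hx'
    erw [dcfPair_psi_apply]
    simp only [tp, MonoidHom.comp_apply, one_mul, mul_one, inv_one]
    rfl

lemma transversal_one_comp1 (a : GPair S S) (f : S →* S) (hf : Function.Surjective f) :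
    IsTransversal a (restPair (⊤ : Subgroup S) (f.comp (⊤ : Subgroup S).subtype)) {1} := by
  intro y
  refine ⟨1, ⟨Finset.mem_singleton_self 1, 1, one_mem _, y, ?_, by simp⟩, ?_⟩
  · obtain ⟨s, hs⟩ := hf y
    exact ⟨⟨⟨s, Subgroup.mem_top s⟩, Subgroup.mem_top _⟩, hs⟩
  · rintro x ⟨hxT, -⟩
    exact Finset.mem_singleton.mp hxT

lemma transversal_one_compSS (a : GPair S S) (v' : S →* S) (hv' : Function.Surjective v') :
    IsTransversal a (tp v') {1} := by
  intro y
  refine ⟨1, ⟨Finset.mem_singleton_self 1, 1, one_mem _, y, ?_, by simp⟩, ?_⟩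
  · obtain ⟨s, hs⟩ := hv' y
    exact ⟨⟨s, Subgroup.mem_top s⟩, hs⟩
  · rintro x ⟨hxT, -⟩
    exact Finset.mem_singleton.mp hxT

lemma psi_inj_restPair {f : S →* S} (hf : Function.Injective f) :
    Function.Injective (restPair (⊤ : Subgroup S) (f.comp (⊤ : Subgroup S).subtype)).ψ :=
  (hf.comp (Subgroup.subtype_injective _)).comp (MulEquiv.injective _)

lemma psi_inj_tp {f : S →* S} (hf : Function.Injective f) :
    Function.Injective (tp f).ψ :=
  hf.comp (Subgroup.subtype_injective _)

variable [Finite S] {p : ℕ} [Fact p.Prime]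

lemma card_H_lt {a : GPair S S} (ha : a.H ≠ ⊤) : Nat.card a.H < Nat.card S := by
  refine lt_of_le_of_ne ?_ fun h => ha (Subgroup.eq_top_of_card_eq _ h)
  have := Subgroup.card_le_of_le (le_top : a.H ≤ ⊤)
  rwa [Subgroup.card_top] at this

open Classical in
lemma key1_top
    (comp1 : ∀ P : Subgroup S, BurnsideMod ℤ_[p] S S →ₗ[ℤ_[p]]
      BurnsideMod ℤ_[p] ↥P S →ₗ[ℤ_[p]] BurnsideMod ℤ_[p] ↥P S)
    (h1 : ∀ P, DCFLaw (comp1 P)) (v f w : S →* S) (hf : Function.Surjective f) :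
    (comp1 ⊤ (gdelta (tp v)) (gdelta (restPair ⊤ (f.comp (⊤ : Subgroup S).subtype))))
        (Quot.mk _ (tp' w)) =
      if cls (v.comp f) = cls w then 1 else 0 := by
  rw [h1 ⊤ (tp v) _ {1} (transversal_one_comp1 _ f hf), Finset.sum_singleton, gdelta_apply,
    key1_conj]
  have hiff : (Quot.mk (gpairConj (G₁ := ↥(⊤ : Subgroup S)) (G₂ := S)) (tp' w) =
      Quot.mk _ (tp' (v.comp f))) ↔ cls (v.comp f) = cls w := by
    rw [cls'_eq_iff, ← cls_eq_iff]
    exact eq_comm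
  rw [if_congr hiff rfl rfl]

lemma key1_small
    (comp1 : ∀ P : Subgroup S, BurnsideMod ℤ_[p] S S →ₗ[ℤ_[p]]
      BurnsideMod ℤ_[p] ↥P S →ₗ[ℤ_[p]] BurnsideMod ℤ_[p] ↥P S)
    (h1 : ∀ P, DCFLaw (comp1 P)) (a : GPair S S) (ha : a.H ≠ ⊤) (f w : S →* S)
    (hf : Function.Injective f) :
    (comp1 ⊤ (gdelta a) (gdelta (restPair ⊤ (f.comp (⊤ : Subgroup S).subtype))))
        (Quot.mk _ (tp' w)) = 0 := by
  obtain ⟨T, hT⟩ := exists_transversal a (restPair ⊤ (f.comp (⊤ : Subgroup S).subtype))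
  rw [h1 ⊤ a _ T hT, bm_sum_apply]
  refine Finset.sum_eq_zero fun x hx => ?_
  rw [gdelta_apply, if_neg]
  intro heq
  have hcard := card_class_top' heq.symm
  have hle : Nat.card (dcfSub a (restPair ⊤ (f.comp (⊤ : Subgroup S).subtype)) x) ≤
      Nat.card a.H := card_dcfSub_le_left _ _ _ (psi_inj_restPair hf)
  have hlt := card_H_lt ha
  show False
  have h2 : Nat.card (dcfPair a (restPair ⊤ (f.comp (⊤ : Subgroup S).subtype)) x).H =
      Nat.card (dcfSub a (restPair ⊤ (f.comp (⊤ : Subgroup S).subtype)) x) := rfl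
  omega

open Classical in
lemma key2_top
    (compSS : BurnsideMod ℤ_[p] S S →ₗ[ℤ_[p]] BurnsideMod ℤ_[p] S S →ₗ[ℤ_[p]]
      BurnsideMod ℤ_[p] S S)
    (hSS : DCFLaw compSS) (v v' w : S →* S) (hv' : Function.Surjective v') :
    (compSS (gdelta (tp v)) (gdelta (tp v'))) (cls w) =
      if cls (v.comp v') = cls w then 1 else 0 := by
  rw [hSS (tp v) (tp v') {1} (transversal_one_compSS _ v' hv'), Finset.sum_singleton,
    gdelta_apply, key2_conj]
  have hiff : (cls w = cls (v.comp v')) ↔ cls (v.comp v') = cls w := eq_comm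
  rw [if_congr hiff rfl rfl]

lemma key2_small_right
    (compSS : BurnsideMod ℤ_[p] S S →ₗ[ℤ_[p]] BurnsideMod ℤ_[p] S S →ₗ[ℤ_[p]]
      BurnsideMod ℤ_[p] S S)
    (hSS : DCFLaw compSS) (a b : GPair S S) (hb : b.H ≠ ⊤) (w : S →* S) :
    (compSS (gdelta a) (gdelta b)) (cls w) = 0 := by
  obtain ⟨T, hT⟩ := exists_transversal a b
  rw [hSS a b T hT, bm_sum_apply]
  refine Finset.sum_eq_zero fun x hx => ?_
  rw [gdelta_apply, if_neg]
  intro heq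
  have hcard : Nat.card (dcfPair a b x).H = Nat.card S := card_class_top heq.symm
  have hle : Nat.card (dcfSub a b x) ≤ Nat.card b.H := card_dcfSub_le_right a b x
  have hlt := card_H_lt hb
  show False
  have h2 : Nat.card (dcfPair a b x).H = Nat.card (dcfSub a b x) := rfl
  omega

lemma key2_small_left
    (compSS : BurnsideMod ℤ_[p] S S →ₗ[ℤ_[p]] BurnsideMod ℤ_[p] S S →ₗ[ℤ_[p]]
      BurnsideMod ℤ_[p] S S)
    (hSS : DCFLaw compSS) (a : GPair S S) (ha : a.H ≠ ⊤) (v' w : S →* S)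
    (hv' : Function.Injective v') :
    (compSS (gdelta a) (gdelta (tp v'))) (cls w) = 0 := by
  obtain ⟨T, hT⟩ := exists_transversal a (tp v')
  rw [hSS a (tp v') T hT, bm_sum_apply]
  refine Finset.sum_eq_zero fun x hx => ?_
  rw [gdelta_apply, if_neg]
  intro heq
  have hcard : Nat.card (dcfPair a (tp v') x).H = Nat.card S := card_class_top heq.symm
  have hle : Nat.card (dcfSub a (tp v') x) ≤ Nat.card a.H :=
    card_dcfSub_le_left _ _ _ (psi_inj_tp hv')
  have hlt := card_H_lt ha
  show False
  have h2 : Nat.card (dcfPair a (tp v') x).H = Nat.card (dcfSub a (tp v') x) := rfl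
  omega

end Keys


/-- Let `F` be a saturated fusion system over a finite `p`-group `S` with characteristic
idempotent `ω ∈ A(S,S)^∧_p` (an idempotent satisfying properties (a), (b1), (b2), (c)).
Writing `ω = ω≈ + ω≺` with `ω≈` supported on the classes `[S,φ]`, `φ ∈ Aut_F(S)`, and
`ω≺` supported on classes of pairs with proper first subgroup, we have
`ω≈ = (1/|Out_F(S)|) Σ_{φ ∈ Out_F(S)} [S,φ]`: equivalently, the coefficient of `ω` at
every class `[S,φ]` with `φ ∈ Aut_F(S)` equals the inverse of the number `N` of such
classes (and `N = |Out_F(S)|`). -/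
theorem stmt17 (p : ℕ) [Fact p.Prime] {S : Type*} [Group S] [Fintype S]
    (hS : IsPGroup p S) (F : FusionSystem S) (hsat : F.Saturated p)
    (compSS : BurnsideMod ℤ_[p] S S →ₗ[ℤ_[p]] BurnsideMod ℤ_[p] S S →ₗ[ℤ_[p]]
      BurnsideMod ℤ_[p] S S)
    (hSS : DCFLaw compSS)
    (comp1 : ∀ P : Subgroup S, BurnsideMod ℤ_[p] S S →ₗ[ℤ_[p]]
      BurnsideMod ℤ_[p] ↥P S →ₗ[ℤ_[p]] BurnsideMod ℤ_[p] ↥P S)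
    (h1 : ∀ P, DCFLaw (comp1 P))
    (comp2 : ∀ P : Subgroup S, BurnsideMod ℤ_[p] S ↥P →ₗ[ℤ_[p]]
      BurnsideMod ℤ_[p] S S →ₗ[ℤ_[p]] BurnsideMod ℤ_[p] S ↥P)
    (h2 : ∀ P, DCFLaw (comp2 P))
    (rep : Quot (gpairConj (G₁ := S) (G₂ := S)) → GPair S S)
    (hrep : ∀ q, Quot.mk _ (rep q) = q)
    (ω : BurnsideMod ℤ_[p] S S)
    (hidem : compSS ω ω = ω)
    (hA : PropA p F ω) (hB1 : PropB1 p F comp1 ω) (hB2 : PropB2 p F comp2 ω)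
    (hC : PropC p rep ω) :
    ∀ a : GPair S S, a.H = ⊤ → a.ψ ∈ F.Hom a.H →
      (Nat.card {q : Quot (gpairConj (G₁ := S) (G₂ := S)) //
          ∃ b : GPair S S, Quot.mk _ b = q ∧ b.H = ⊤ ∧ b.ψ ∈ F.Hom b.H} : ℤ_[p]) *
        ω (Quot.mk _ a) = 1 := by
  classical
  intro a ha haF
  haveI : Fintype (Quot (gpairConj (G₁ := S) (G₂ := S))) := Fintype.ofFinite _
  have hrc : ∀ q, Quot.mk _ (rchoice F rep q) = q := rchoice_mk hrep
  have hωx : ω = ∑ q, ω q • gdelta (rchoice F rep q) := omega_expand ω _ hrc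
  set c := ω (cls (MonoidHom.id S)) with hc_def
  -- the picking lemma
  have pick : ∀ (val : Quot (gpairConj (G₁ := S) (G₂ := S)) → ℤ_[p])
      (qs : Quot (gpairConj (G₁ := S) (G₂ := S))),
      (∀ q, ω q ≠ 0 → q ≠ qs → val q = 0) → (ω qs ≠ 0 → val qs = 1) →
      ∑ q, ω q * val q = ω qs := by
    intro val qs h0 h1v
    rw [Finset.sum_eq_single qs ?_ ?_]
    · by_cases h : ω qs = 0
      · rw [h, zero_mul]
      · rw [h1v h, mul_one]
    · intro q _ hq
      by_cases hω0 : ω q = 0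
      · rw [hω0, zero_mul]
      · rw [h0 q hω0 hq, mul_zero]
    · intro habs
      exact absurd (Finset.mem_univ qs) habs
  -- expansion lemmas
  have e1 : ∀ (β : BurnsideMod ℤ_[p] ↥(⊤ : Subgroup S) S) t,
      (comp1 ⊤ ω β) t = ∑ q, ω q * (comp1 ⊤ (gdelta (rchoice F rep q)) β) t := by
    intro β t
    rw [linmap_omega_expand (comp1 ⊤) ω _ hωx, LinearMap.sum_apply, bm_sum_apply]
    refine Finset.sum_congr rfl fun q _ => ?_
    rw [LinearMap.smul_apply]
    rfl
  have e2 : (compSS ω ω) (Quot.mk _ a) = ∑ q, ∑ q', ω q * (ω q' *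
      (compSS (gdelta (rchoice F rep q)) (gdelta (rchoice F rep q'))) (Quot.mk _ a)) := by
    rw [linmap_omega_expand compSS ω _ hωx, LinearMap.sum_apply, bm_sum_apply]
    refine Finset.sum_congr rfl fun q _ => ?_
    have inner : (compSS (gdelta (rchoice F rep q))) ω (Quot.mk _ a) = ∑ q', ω q' *
        (compSS (gdelta (rchoice F rep q)) (gdelta (rchoice F rep q'))) (Quot.mk _ a) := by
      rw [linmap_omega_expand (compSS (gdelta (rchoice F rep q))) ω _ hωx, bm_sum_apply]
      exact Finset.sum_congr rfl fun q' _ => smul_bm_apply _ _ _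
    rw [LinearMap.smul_apply, smul_bm_apply, inner, Finset.mul_sum]
  -- uniformity of the coefficients on the top classes
  have huni : ∀ q, IsTopCl F q → ω q = c := by
    intro q' hq'
    have hFBq' : FB F q' := FB_iff_isTopCl.mpr hq'
    obtain ⟨u', hru', hq'cls, hu'F⟩ := rchoice_top (rep := rep) hFBq'
    have hu'bij : Function.Bijective u' := FAuto_bij hu'F
    have hq0 : FB F (cls (MonoidHom.id S)) := ⟨MonoidHom.id S, rfl, FAuto_id⟩
    have ht := congrFun (hB1 ⊤ (u'.comp (⊤ : Subgroup S).subtype) hu'F) (Quot.mk _ (tp' u'))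
    rw [e1, e1] at ht
    have hL := pick (fun q => (comp1 ⊤ (gdelta (rchoice F rep q))
        (gdelta (restPair ⊤ (u'.comp (⊤ : Subgroup S).subtype)))) (Quot.mk _ (tp' u')))
        (cls (MonoidHom.id S)) ?_ ?_
    rotate_left
    · intro q hωq hne
      by_cases hFB : FB F q
      · obtain ⟨uq, hruq, hqcls, huqF⟩ := rchoice_top (rep := rep) hFB
        rw [hruq, key1_top comp1 h1 uq u' u' hu'bij.2, if_neg]
        intro hcontra
        apply hne
        have h5 : cls (uq.comp u') = cls ((MonoidHom.id S).comp u') := by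
          rwa [MonoidHom.id_comp]
        rw [hqcls, (cls_comp_cancel hu'bij).mp h5]
      · obtain ⟨-, -, hne_top⟩ := rchoice_small (rep := rep) hFB (hA q hωq)
        exact key1_small comp1 h1 _ hne_top u' u' hu'bij.1
    · intro hω0
      obtain ⟨u0, hru0, h0cls, hu0F⟩ := rchoice_top (rep := rep) hq0
      rw [hru0, key1_top comp1 h1 u0 u' u' hu'bij.2, if_pos]
      have h3 := cls_comp_right hu'bij.2 (h0cls.symm : cls u0 = cls (MonoidHom.id S))
      rwa [MonoidHom.id_comp] at h3
    rw [hL] at ht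
    have hid : ((MonoidHom.id S).comp (⊤ : Subgroup S).subtype) = (⊤ : Subgroup S).subtype :=
      MonoidHom.id_comp _
    rw [← hid] at ht
    have hR := pick (fun q => (comp1 ⊤ (gdelta (rchoice F rep q))
        (gdelta (restPair ⊤ ((MonoidHom.id S).comp (⊤ : Subgroup S).subtype))))
        (Quot.mk _ (tp' u'))) q' ?_ ?_
    rotate_left
    · intro q hωq hne
      by_cases hFB : FB F q
      · obtain ⟨uq, hruq, hqcls, huqF⟩ := rchoice_top (rep := rep) hFB
        rw [hruq, key1_top comp1 h1 uq (MonoidHom.id S) u' Function.bijective_id.2, if_neg]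
        intro hcontra
        apply hne
        rw [MonoidHom.comp_id] at hcontra
        rw [hqcls, hcontra, ← hq'cls]
      · obtain ⟨-, -, hne_top⟩ := rchoice_small (rep := rep) hFB (hA q hωq)
        exact key1_small comp1 h1 _ hne_top (MonoidHom.id S) u' Function.injective_id
    · intro hω0
      rw [hru', key1_top comp1 h1 u' (MonoidHom.id S) u' Function.bijective_id.2, if_pos]
      rw [MonoidHom.comp_id]
    rw [hR] at ht
    exact ht.symm
  -- the class of `a` itself
  have ht0 : IsTopCl F (Quot.mk _ a) := ⟨a, rfl, ha, haF⟩
  obtain ⟨u₀, hau₀⟩ := exists_tp_of_top a ha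
  have ht0cls : Quot.mk (gpairConj (G₁ := S) (G₂ := S)) a = cls u₀ := by rw [hau₀]; rfl
  have hu₀F : FAuto F u₀ := by rw [hau₀] at haF; exact haF
  -- counting the top classes
  have hNfilter : ((Nat.card {q : Quot (gpairConj (G₁ := S) (G₂ := S)) //
      ∃ b : GPair S S, Quot.mk _ b = q ∧ b.H = ⊤ ∧ b.ψ ∈ F.Hom b.H}) : ℤ_[p]) =
      ∑ q, (if IsTopCl F q then (1 : ℤ_[p]) else 0) := by
    rw [Finset.sum_boole]
    congr 1
    rw [Nat.card_eq_fintype_card, Fintype.card_subtype]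
    congr 1
  -- Equation II : N * c² = c
  have hEq2 : ((Nat.card {q : Quot (gpairConj (G₁ := S) (G₂ := S)) //
      ∃ b : GPair S S, Quot.mk _ b = q ∧ b.H = ⊤ ∧ b.ψ ∈ F.Hom b.H}) : ℤ_[p]) * (c * c)
      = c := by
    have h := congrFun hidem (Quot.mk _ a)
    rw [e2] at h
    have hinner : ∀ q', ∑ q, ω q * (ω q' *
        (compSS (gdelta (rchoice F rep q)) (gdelta (rchoice F rep q'))) (Quot.mk _ a)) =
        (if IsTopCl F q' then c * c else 0) := by
      intro q'
      by_cases hω' : ω q' = 0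
      · rw [Finset.sum_eq_zero (fun q _ => by rw [hω', zero_mul, mul_zero])]
        by_cases hq' : IsTopCl F q'
        · rw [if_pos hq', ← huni q' hq', hω', mul_zero]
        · rw [if_neg hq']
      · by_cases hFB' : FB F q'
        · obtain ⟨u', hru', hq'cls, hu'F⟩ := rchoice_top (rep := rep) hFB'
          have hu'bij : Function.Bijective u' := FAuto_bij hu'F
          have hq'top : IsTopCl F q' := FB_iff_isTopCl.mp hFB'
          rw [if_pos hq'top]
          have hfact : ∀ q : Quot (gpairConj (G₁ := S) (G₂ := S)), ω q * (ω q' *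
              (compSS (gdelta (rchoice F rep q)) (gdelta (rchoice F rep q'))) (Quot.mk _ a)) =
              ω q' * (ω q *
              (compSS (gdelta (rchoice F rep q)) (gdelta (rchoice F rep q'))) (Quot.mk _ a)) :=
            fun q => by ring
          rw [Finset.sum_congr rfl (fun q _ => hfact q), ← Finset.mul_sum]
          have hqDFB : FB F (cls (u₀.comp (minv u' hu'bij))) :=
            ⟨u₀.comp (minv u' hu'bij), rfl, FAuto_comp hu₀F (FAuto_minv hu'F hu'bij)⟩
          have hcomp_eq : (u₀.comp (minv u' hu'bij)).comp u' = u₀ := by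
            ext x
            exact congrArg u₀ ((MulEquiv.ofBijective u' hu'bij).symm_apply_apply x)
          have hsum := pick (fun q =>
              (compSS (gdelta (rchoice F rep q)) (gdelta (rchoice F rep q'))) (Quot.mk _ a))
              (cls (u₀.comp (minv u' hu'bij))) ?_ ?_
          rotate_left
          · intro q hωq hne
            by_cases hFB : FB F q
            · obtain ⟨uq, hruq, hqcls, huqF⟩ := rchoice_top (rep := rep) hFB
              rw [hruq, hru', ht0cls, key2_top compSS hSS uq u' u₀ hu'bij.2, if_neg]
              intro hcon
              apply hne
              rw [← hcomp_eq] at hcon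
              rw [hqcls, (cls_comp_cancel hu'bij).mp hcon]
            · obtain ⟨-, -, hne_top⟩ := rchoice_small (rep := rep) hFB (hA q hωq)
              rw [hru', ht0cls]
              exact key2_small_left compSS hSS _ hne_top u' u₀ hu'bij.1
          · intro hωD
            obtain ⟨uD, hruD, hDcls, huDF⟩ := rchoice_top (rep := rep) hqDFB
            rw [hruD, hru', ht0cls, key2_top compSS hSS uD u' u₀ hu'bij.2, if_pos]
            have h6 : cls uD = cls (u₀.comp (minv u' hu'bij)) := hDcls.symm
            have h4 := cls_comp_right hu'bij.2 h6
            rwa [hcomp_eq] at h4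
          rw [hsum, huni q' hq'top, huni _ (FB_iff_isTopCl.mp hqDFB)]
        · rw [if_neg (fun hcl => hFB' (FB_iff_isTopCl.mpr hcl))]
          refine Finset.sum_eq_zero fun q _ => ?_
          by_cases hωq : ω q = 0
          · rw [hωq, zero_mul]
          · obtain ⟨-, -, hne_top⟩ := rchoice_small (rep := rep) hFB' (hA q' hω')
            rw [ht0cls, key2_small_right compSS hSS _ _ hne_top u₀, mul_zero, mul_zero]
    rw [Finset.sum_comm] at h
    rw [Finset.sum_congr rfl (fun q' _ => hinner q')] at h
    have hsplit : ∑ q', (if IsTopCl F q' then c * c else 0) =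
        (∑ q', (if IsTopCl F q' then (1 : ℤ_[p]) else 0)) * (c * c) := by
      rw [Finset.sum_mul]
      refine Finset.sum_congr rfl fun q' _ => ?_
      split_ifs
      · rw [one_mul]
      · rw [zero_mul]
    rw [hsplit, ← hNfilter] at h
    rw [h]
    exact huni _ ht0
  -- Equation I : p ∣ 1 - N * c
  have hdiv : (p : ℤ_[p]) ∣ (1 - ((Nat.card {q : Quot (gpairConj (G₁ := S) (G₂ := S)) //
      ∃ b : GPair S S, Quot.mk _ b = q ∧ b.H = ⊤ ∧ b.ψ ∈ F.Hom b.H}) : ℤ_[p]) * c) := by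
    have hC' : ∑ q, ω q * ((rep q).H.index : ℤ_[p]) = 1 := by
      rw [← finsum_eq_sum_of_fintype]
      exact hC
    have hNc : ((Nat.card {q : Quot (gpairConj (G₁ := S) (G₂ := S)) //
        ∃ b : GPair S S, Quot.mk _ b = q ∧ b.H = ⊤ ∧ b.ψ ∈ F.Hom b.H}) : ℤ_[p]) * c =
        ∑ q, (if IsTopCl F q then c else 0) := by
      rw [hNfilter, Finset.sum_mul]
      refine Finset.sum_congr rfl fun q _ => ?_
      split_ifs
      · rw [one_mul]
      · rw [zero_mul]
    rw [← hC', hNc, ← Finset.sum_sub_distrib]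
    refine Finset.dvd_sum fun q _ => ?_
    by_cases hq : IsTopCl F q
    · rw [if_pos hq]
      have hidx : (rep q).H = ⊤ := by
        obtain ⟨b, hb, hbtop, -⟩ := hq
        obtain ⟨v, rfl⟩ := exists_tp_of_top b hbtop
        exact eq_top_of_class_top (w := v) (by rw [hrep q, ← hb]; rfl)
      rw [hidx, Subgroup.index_top, Nat.cast_one, mul_one, huni q hq, sub_self]
      exact dvd_zero _
    · rw [if_neg hq, sub_zero]
      by_cases hωq : ω q = 0
      · rw [hωq, zero_mul]
        exact dvd_zero _
      · have hne : (rep q).H ≠ ⊤ := by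
          intro htop
          obtain ⟨v, hv⟩ := exists_tp_of_top (rep q) htop
          obtain ⟨b', hb', hb'F⟩ := hA q hωq
          have hb'top : b'.H = ⊤ :=
            eq_top_of_class_top (w := v) (c := b') (by rw [hb', ← hrep q, hv]; rfl)
          exact hq ⟨b', hb', hb'top, hb'F⟩
        have hdvdp : p ∣ (rep q).H.index := by
          obtain ⟨n, hn⟩ := (IsPGroup.iff_card (p := p) (G := S)).mp hS
          have hdvd1 : (rep q).H.index ∣ p ^ n := by
            rw [← hn]
            exact ⟨Nat.card (rep q).H, (Subgroup.index_mul_card (rep q).H).symm⟩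
          obtain ⟨i, hi, he⟩ := (Nat.dvd_prime_pow Fact.out).mp hdvd1
          cases i with
          | zero =>
            rw [pow_zero] at he
            exact absurd (Subgroup.index_eq_one.mp he) hne
          | succ i =>
            rw [he]
            exact dvd_pow_self p (Nat.succ_ne_zero i)
        obtain ⟨m, hm⟩ := hdvdp
        refine ⟨ω q * m, ?_⟩
        rw [hm]
        push_cast
        ring
  -- conclusion
  have hc0 : c ≠ 0 := by
    intro h0
    rw [h0, mul_zero, sub_zero] at hdiv
    have hunit : IsUnit (p : ℤ_[p]) := isUnit_of_dvd_one hdiv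
    have hnorm := PadicInt.isUnit_iff.mp hunit
    rw [PadicInt.norm_p, inv_eq_one] at hnorm
    have hp1 : p = 1 := by exact_mod_cast hnorm
    exact (Fact.out (p := p.Prime)).one_lt.ne' hp1
  have hz : c * (((Nat.card {q : Quot (gpairConj (G₁ := S) (G₂ := S)) //
      ∃ b : GPair S S, Quot.mk _ b = q ∧ b.H = ⊤ ∧ b.ψ ∈ F.Hom b.H}) : ℤ_[p]) * c - 1) = 0 := by
    linear_combination hEq2
  rcases mul_eq_zero.mp hz with h | h
  · exact absurd h hc0
  · rw [huni _ ht0]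
    exact sub_eq_zero.mp h
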